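/- Let −1 < p ≤ −1/2 and let j_{p,1} be the first positive zero of J_p. With α = 1/(8(p+1)(p+3)), for all x ∈ (0, j_{p,1}) one has ((p+2)/(p+1) − αx²)·𝓙_{p+1}(x) < 1/(p+1) + 𝓙_p(x) − αx². -/

import Mathlib

open Real

noncomputable def besselJn (p x : ℝ) : ℝ :=
  ∑' n : ℕ, (-(1:ℝ)/4)^n * x^(2*n) / ((Real.Gamma (p+n+1) / Real.Gamma (p+1)) * n.factorial)

noncomputable def besselIn (p x : ℝ) : ℝ :=
  ∑' n : ℕ, ((1:ℝ)/4)^n * x^(2*n) / ((Real.Gamma (p+n+1) / Real.Gamma (p+1)) * n.factorial)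

noncomputable def besselJ (p x : ℝ) : ℝ :=
  ∑' n : ℕ, (-1:ℝ)^n * (x/2)^(p+2*n) / (n.factorial * Real.Gamma (p+n+1))

/-! ### Pochhammer products -/

noncomputable def poch (p : ℝ) (n : ℕ) : ℝ := ∏ k ∈ Finset.range n, (p+1+k)

lemma poch_zero (p : ℝ) : poch p 0 = 1 := by simp [poch]

lemma poch_succ (p : ℝ) (n : ℕ) : poch p (n+1) = poch p n * (p+1+n) := by
  simp [poch, Finset.prod_range_succ]

lemma poch_pos {p : ℝ} (hp : -1 < p) (n : ℕ) : 0 < poch p n := by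
  apply Finset.prod_pos
  intro k _
  have : (0:ℝ) ≤ k := Nat.cast_nonneg k
  linarith

lemma Gamma_ratio {p : ℝ} (hp : -1 < p) (n : ℕ) :
    Real.Gamma (p+n+1) / Real.Gamma (p+1) = poch p n := by
  have hG : Real.Gamma (p+1) ≠ 0 := ne_of_gt (Real.Gamma_pos_of_pos (by linarith))
  rw [div_eq_iff hG]
  induction n with
  | zero => simp [poch_zero]
  | succ n ih =>
    have hne : p + n + 1 ≠ 0 := by
      have : (0:ℝ) ≤ n := Nat.cast_nonneg n
      intro h; linarith
    have : (p + (n+1:ℕ) + 1 : ℝ) = (p + n + 1) + 1 := by push_cast; ring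
    rw [this, Real.Gamma_add_one hne, ih, poch_succ]
    ring

lemma poch_ge {p : ℝ} (hp : -1 < p) (n : ℕ) :
    (p+1) * n.factorial ≤ poch p (n+1) := by
  induction n with
  | zero => simp [poch_succ, poch_zero]
  | succ n ih =>
    rw [poch_succ]
    have h1 : ((n:ℝ)+1) ≤ p+1+(n+1:ℕ) := by push_cast; linarith
    have h2 : (0:ℝ) < poch p (n+1) := poch_pos hp _
    calc (p+1) * (n+1).factorial = ((p+1) * n.factorial) * ((n:ℝ)+1) := by
          rw [Nat.factorial_succ]; push_cast; ring
      _ ≤ poch p (n+1) * ((n:ℝ)+1) := by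
          apply mul_le_mul_of_nonneg_right ih (by positivity)
      _ ≤ poch p (n+1) * (p+1+(n+1:ℕ)) := by
          apply mul_le_mul_of_nonneg_left h1 (le_of_lt h2)

lemma poch_one (p : ℝ) : poch p 1 = p + 1 := by
  rw [poch_succ, poch_zero]; push_cast; ring

lemma poch_two (p : ℝ) : poch p 2 = (p+1) * (p+2) := by
  rw [poch_succ, poch_one]; push_cast; ring

lemma poch_shift (p : ℝ) (n : ℕ) : (p+1) * poch (p+1) n = poch p (n+1) := by
  induction n with
  | zero => rw [poch_zero, poch_one]; ring
  | succ n ih =>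
    rw [poch_succ (p+1) n, poch_succ p (n+1)]
    push_cast
    rw [← ih]
    ring

/-! ### The series terms -/

noncomputable def aterm (p x : ℝ) (n : ℕ) : ℝ :=
  (-(1:ℝ)/4)^n * x^(2*n) / (poch p n * n.factorial)

lemma aterm_eq (p x : ℝ) (n : ℕ) :
    aterm p x n = (-1)^n * (x^2/4)^n / (poch p n * n.factorial) := by
  rw [aterm]
  congr 1
  rw [pow_mul, ← mul_pow, ← mul_pow]
  congr 1
  ring

lemma aterm_abs {p : ℝ} (hp : -1 < p) (x : ℝ) (n : ℕ) :
    |aterm p x n| = (x^2/4)^n / (poch p n * n.factorial) := by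
  have h3 : (0:ℝ) < poch p n * n.factorial :=
    mul_pos (poch_pos hp n) (by positivity)
  rw [aterm, abs_div, abs_mul, abs_pow, abs_pow, abs_of_pos h3]
  have h1 : |(-(1:ℝ)/4)| = 1/4 := by norm_num
  have h2 : |x| ^ (2*n) = (x^2)^n := by rw [pow_mul, sq_abs]
  rw [h1, h2, div_pow]
  rw [div_pow]
  ring

lemma aterm_abs_le {p : ℝ} (hp : -1 < p) (x : ℝ) (n : ℕ) :
    |aterm p x n| ≤ (1 + 1/(p+1)) * ((x^2/4)^n / n.factorial) := by
  have hp1 : (0:ℝ) < p + 1 := by linarith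
  rw [aterm_abs hp]
  match n with
  | 0 => simp [poch_zero]; positivity
  | (m+1) =>
    have h4 : (p+1) ≤ poch p (m+1) := by
      have := poch_ge hp m
      have h5 : (1:ℝ) ≤ m.factorial := by
        exact_mod_cast Nat.one_le_iff_ne_zero.mpr m.factorial_ne_zero
      nlinarith
    have hf : (0:ℝ) < (m+1).factorial := by positivity
    calc (x^2/4)^(m+1) / (poch p (m+1) * (m+1).factorial)
        ≤ (x^2/4)^(m+1) / ((p+1) * (m+1).factorial) := by
          have : (0:ℝ) < (p+1) * (m+1).factorial := by positivity
          apply div_le_div_of_nonneg_left (by positivity) this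
          exact mul_le_mul_of_nonneg_right h4 (le_of_lt hf)
      _ = (1/(p+1)) * ((x^2/4)^(m+1) / (m+1).factorial) := by
          rw [div_mul_eq_div_div_swap]; ring
      _ ≤ (1 + 1/(p+1)) * ((x^2/4)^(m+1) / (m+1).factorial) := by
          apply mul_le_mul_of_nonneg_right _ (by positivity)
          linarith [one_div_pos.mpr hp1]

lemma summable_aterm {p : ℝ} (hp : -1 < p) (x : ℝ) : Summable (aterm p x) := by
  apply Summable.of_norm_bounded
    ((Real.summable_pow_div_factorial (x^2/4)).mul_left (1 + 1/(p+1)))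
  intro n
  exact aterm_abs_le hp x n

lemma besselJn_eq {p : ℝ} (hp : -1 < p) (x : ℝ) : besselJn p x = ∑' n, aterm p x n := by
  apply tsum_congr
  intro n
  rw [aterm, Gamma_ratio hp]

/-! ### The factorization of besselJ -/

lemma Gamma_p1_pos {p : ℝ} (hp : -1 < p) : 0 < Real.Gamma (p+1) :=
  Real.Gamma_pos_of_pos (by linarith)

lemma besselJ_factor {p : ℝ} (hp : -1 < p) {t : ℝ} (ht : 0 < t) :
    besselJ p t = (t/2)^p / Real.Gamma (p+1) * besselJn p t := by
  have ht2 : (0:ℝ) < t/2 := by linarith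
  have hG : Real.Gamma (p+1) ≠ 0 := ne_of_gt (Gamma_p1_pos hp)
  rw [besselJn_eq hp, besselJ, ← tsum_mul_left]
  apply tsum_congr
  intro n
  have hpow : (t/2)^(p+2*(n:ℕ)) = (t/2)^p * (t/2)^(2*n : ℕ) := by
    rw [show (p+2*(n:ℕ) : ℝ) = p + ((2*n : ℕ) : ℝ) by push_cast; ring]
    rw [Real.rpow_add ht2, Real.rpow_natCast]
  have hGn : Real.Gamma (p+n+1) = poch p n * Real.Gamma (p+1) := by
    have := Gamma_ratio hp (p := p) n
    field_simp at this
    linarith [this]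
  have hGnpos : 0 < Real.Gamma (p+n+1) := by
    rw [hGn]; exact mul_pos (poch_pos hp n) (Gamma_p1_pos hp)
  rw [hpow, aterm, hGn]
  have h2 : ((-(1:ℝ))^n * ((t/2)^(2*n:ℕ)) : ℝ) = (-(1:ℝ)/4)^n * t^(2*n) := by
    rw [pow_mul, pow_mul, div_pow, ← mul_pow, ← mul_pow]
    norm_num
    ring_nf
  have hP := poch_pos hp (p := p) n
  have hfac : ((n.factorial : ℝ)) ≠ 0 := by positivity
  rw [← h2]
  field_simp

/-! ### Continuity and the zero below 2 -/

noncomputable def asum (p x : ℝ) : ℝ := ∑' n, aterm p x n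

lemma asum_continuousOn {p : ℝ} (hp : -1 < p) :
    ContinuousOn (asum p) (Set.Icc (0:ℝ) 2) := by
  apply continuousOn_tsum (u := fun n => (1 + 1/(p+1)) * ((1:ℝ)^n / n.factorial))
  · intro n
    apply Continuous.continuousOn
    unfold aterm
    fun_prop
  · exact (Real.summable_pow_div_factorial 1).mul_left _
  · intro n y hy
    rw [Real.norm_eq_abs]
    refine le_trans (aterm_abs_le hp y n) ?_
    have h1 : (y^2/4)^n ≤ 1^n := by
      apply pow_le_pow_left₀ (by positivity)
      obtain ⟨h0, h2⟩ := hy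
      nlinarith
    have hp1 : (0:ℝ) < p+1 := by linarith
    have hq : (0:ℝ) < 1 + 1/(p+1) := by positivity
    have : (y^2/4)^n / n.factorial ≤ 1^n / n.factorial := by
      rcases Nat.eq_zero_or_pos n.factorial with h | h
      · exact absurd h n.factorial_ne_zero
      · have hfp : (0:ℝ) < n.factorial := by exact_mod_cast h
        exact div_le_div_of_nonneg_right h1 (le_of_lt hfp)
    nlinarith

lemma asum_zero {p : ℝ} (hp : -1 < p) : asum p 0 = 1 := by
  rw [asum, tsum_eq_single 0]
  · simp [aterm, poch_zero]
  · intro n hn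
    simp [aterm, zero_pow (by omega : 2*n ≠ 0)]

lemma fact_ge_geom (n : ℕ) : (6:ℝ) * 4^n ≤ (n+3).factorial := by
  induction n with
  | zero => norm_num [Nat.factorial]
  | succ n ih =>
    have h : ((n+4).factorial : ℝ) = (n+4) * (n+3).factorial := by
      rw [show n+4 = (n+3)+1 from rfl, Nat.factorial_succ]; push_cast; ring
    have h4 : (4:ℝ) ≤ n+4 := by
      have : (0:ℝ) ≤ n := Nat.cast_nonneg n
      linarith
    calc (6:ℝ) * 4^(n+1) = 4 * (6 * 4^n) := by ring
      _ ≤ 4 * (n+3).factorial := by nlinarith [pow_pos (by norm_num : (0:ℝ) < 4) n]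
      _ ≤ (n+4)*(n+3).factorial := by
          have : (0:ℝ) < (n+3).factorial := by positivity
          nlinarith
      _ = (n+4).factorial := by rw [h]

lemma aterm_two (p : ℝ) (n : ℕ) :
    aterm p 2 n = (-1)^n / (poch p n * n.factorial) := by
  rw [aterm]
  congr 1
  rw [pow_mul]
  norm_num
  rw [← mul_pow]
  norm_num

lemma asum_two_neg {p : ℝ} (hp : -1 < p) (hp2 : p ≤ -1/2) : asum p 2 < 0 := by
  have hp1 : (0:ℝ) < p + 1 := by linarith
  have hp2' : (0:ℝ) < p + 2 := by linarith
  have hs := summable_aterm hp (p := p) (2:ℝ)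
  have hsplit := Summable.sum_add_tsum_nat_add 3 hs
  have hb : ∀ n : ℕ, aterm p 2 (n+3) ≤ (1/(12*(p+1))) * (1/4)^n := by
    intro n
    have hPpos := poch_pos hp (p := p) (n+3)
    have hfpos : (0:ℝ) < (n+3).factorial := by positivity
    have hP : 2 * (p+1) ≤ poch p (n+3) := by
      have h2 := poch_ge hp (p := p) (n+2)
      have h3 : (2:ℝ) ≤ (n+2).factorial := by
        have := Nat.factorial_le (show 2 ≤ n+2 by omega)
        calc (2:ℝ) = (Nat.factorial 2 : ℕ) := by norm_num [Nat.factorial]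
          _ ≤ _ := by exact_mod_cast this
      nlinarith
    have hF : (6:ℝ) * 4^n ≤ ((n+3).factorial : ℝ) := fact_ge_geom n
    have h4pos : (0:ℝ) < 4^n := by positivity
    have hden : 12*(p+1) * 4^n ≤ poch p (n+3) * (n+3).factorial := by
      calc 12*(p+1)*4^n = (2*(p+1)) * (6*4^n) := by ring
        _ ≤ poch p (n+3) * (n+3).factorial := by
            apply mul_le_mul hP hF (by positivity) (le_of_lt hPpos)
    calc aterm p 2 (n+3) ≤ 1 / (poch p (n+3) * (n+3).factorial) := by
          rw [aterm_two]
          have hnum : ((-1:ℝ))^(n+3) ≤ 1 := by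
            rcases Nat.even_or_odd (n+3) with h | h
            · rw [h.neg_one_pow]
            · rw [h.neg_one_pow]; norm_num
          exact div_le_div_of_nonneg_right hnum (le_of_lt (mul_pos hPpos hfpos))
      _ ≤ 1 / (12*(p+1) * 4^n) := by
          apply one_div_le_one_div_of_le (by positivity) hden
      _ = (1/(12*(p+1))) * (1/4)^n := by
          rw [show ((1:ℝ)/4)^n = 1/(4:ℝ)^n by rw [div_pow, one_pow]]
          rw [div_mul_div_comm, mul_one]
  have htail : ∑' n, aterm p 2 (n+3) ≤ 1/(9*(p+1)) := by
    have hsg : Summable (fun n : ℕ => (1/(12*(p+1))) * (1/4:ℝ)^n) :=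
      (summable_geometric_of_lt_one (by norm_num) (by norm_num)).mul_left _
    calc ∑' n, aterm p 2 (n+3) ≤ ∑' n, (1/(12*(p+1))) * (1/4:ℝ)^n :=
          Summable.tsum_le_tsum hb ((summable_nat_add_iff 3).mpr hs) hsg
      _ = (1/(12*(p+1))) * (1-1/4)⁻¹ := by
          rw [tsum_mul_left, tsum_geometric_of_lt_one (by norm_num) (by norm_num)]
      _ = 1/(9*(p+1)) := by field_simp; ring
  have hsum3 : ∑ i ∈ Finset.range 3, aterm p 2 i
      = 1 - 1/(p+1) + 1/(2*(p+1)*(p+2)) := by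
    rw [Finset.sum_range_succ, Finset.sum_range_succ, Finset.sum_range_one]
    rw [aterm_two, aterm_two, aterm_two, poch_zero, poch_one, poch_two]
    norm_num [Nat.factorial]
    field_simp
    ring
  have final : asum p 2 ≤ 1 - 1/(p+1) + 1/(2*(p+1)*(p+2)) + 1/(9*(p+1)) := by
    rw [asum, ← hsplit, hsum3]
    linarith
  have : 1 - 1/(p+1) + 1/(2*(p+1)*(p+2)) + 1/(9*(p+1)) < 0 := by
    rw [show (1:ℝ) - 1/(p+1) + 1/(2*(p+1)*(p+2)) + 1/(9*(p+1))
        = (18*(p+1)*(p+2) - 18*(p+2) + 9 + 2*(p+2)) / (18*(p+1)*(p+2)) by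
      field_simp; ring]
    apply div_neg_of_neg_of_pos _ (by positivity)
    nlinarith [mul_nonneg (le_of_lt hp1) (by linarith : (0:ℝ) ≤ -2*p-1)]
  linarith

lemma exists_zero {p : ℝ} (hp : -1 < p) (hp2 : p ≤ -1/2) :
    ∃ c : ℝ, 0 < c ∧ c < 2 ∧ besselJ p c = 0 := by
  have h2 := asum_two_neg hp hp2
  have h0 := asum_zero hp (p := p)
  have hIVT := intermediate_value_Icc' (by norm_num : (0:ℝ) ≤ 2) (asum_continuousOn hp)
  have h0mem : (0:ℝ) ∈ Set.Icc (asum p 2) (asum p 0) := by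
    constructor
    · linarith
    · rw [h0]; norm_num
  obtain ⟨c, hc, hasum⟩ := hIVT h0mem
  have hc0 : c ≠ 0 := by
    intro h; rw [h] at hasum; rw [h0] at hasum; norm_num at hasum
  have hc2 : c ≠ 2 := by
    intro h; rw [h] at hasum; rw [hasum] at h2; norm_num at h2
  have hcpos : 0 < c := lt_of_le_of_ne hc.1 (Ne.symm hc0)
  refine ⟨c, hcpos, lt_of_le_of_ne hc.2 hc2, ?_⟩
  rw [besselJ_factor hp hcpos, besselJn_eq hp, show (∑' n, aterm p c n) = asum p c from rfl,
    hasum, mul_zero]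

noncomputable def uaux (p x : ℝ) (m : ℕ) : ℝ :=
  (x^2/4)^(m+3) * ((m+1)*((m:ℝ)-p)) /
    (2*(p+3)*(m+3)*(p+m+4) * poch p (m+3) * (m+2).factorial)

noncomputable def hterm (p x : ℝ) (m : ℕ) : ℝ :=
  aterm p x (m+3) - (p+2)/(p+1) * aterm (p+1) x (m+3)
    + (1/(8*(p+1)*(p+3))) * x^2 * aterm (p+1) x (m+2)

lemma uaux_pos {p : ℝ} (hp : -1 < p) (hp2 : p ≤ -1/2) {x : ℝ} (hx : 0 < x) (m : ℕ) :
    0 < uaux p x m := by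
  have h1 : (0:ℝ) < (m:ℝ) - p := by
    have : (0:ℝ) ≤ m := Nat.cast_nonneg m
    linarith
  have h2 : (0:ℝ) < p+3 := by linarith
  have h3 : (0:ℝ) < (m:ℝ)+3 := by positivity
  have h4 : (0:ℝ) < p+m+4 := by
    have : (0:ℝ) ≤ m := Nat.cast_nonneg m
    linarith
  have h5 := poch_pos hp (p := p) (m+3)
  have h6 : (0:ℝ) < ((m+2).factorial : ℝ) := by positivity
  rw [uaux]
  have hnum : (0:ℝ) < (x^2/4)^(m+3) * ((m+1)*((m:ℝ)-p)) := by positivity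
  positivity

lemma hterm_eq {p : ℝ} (hp : -1 < p) (x : ℝ) (m : ℕ) :
    hterm p x m = (-1)^m * uaux p x m := by
  have hp1 : (0:ℝ) < p+1 := by linarith
  have h2 : (0:ℝ) < p+3 := by linarith
  have hm4 : (0:ℝ) < p+m+4 := by
    have : (0:ℝ) ≤ m := Nat.cast_nonneg m
    linarith
  have hP := poch_pos hp (p := p) (m+3)
  have hQ2 : poch (p+1) (m+2) = poch p (m+3) / (p+1) := by
    have := poch_shift p (m+2)
    field_simp
    linarith [this]
  have hQ3 : poch (p+1) (m+3) = poch p (m+3) * (p+m+4) / (p+1) := by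
    have h1 := poch_shift p (m+3)
    have h2 := poch_succ p (m+3)
    rw [h2] at h1
    have : (p+1+((m+3:ℕ):ℝ)) = p+m+4 := by push_cast; ring
    rw [this] at h1
    field_simp
    linarith [h1]
  have hfac : ((m+3).factorial : ℝ) = ((m:ℝ)+3) * (m+2).factorial := by
    rw [show m+3 = (m+2)+1 from rfl, Nat.factorial_succ]; push_cast; ring
  have hsign3 : ((-1:ℝ))^(m+3) = -(-1:ℝ)^m := by
    rw [pow_add]; norm_num
  have hsign2 : ((-1:ℝ))^(m+2) = (-1:ℝ)^m := by
    rw [pow_add]; norm_num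
  have hpow3 : ((x^2/4):ℝ)^(m+3) = (x^2/4)^(m+2) * (x^2/4) := by
    rw [pow_succ]
  have hfm : (0:ℝ) < ((m+2).factorial : ℝ) := by positivity
  rw [hterm, uaux, aterm_eq, aterm_eq, aterm_eq, hQ2, hQ3, hfac, hsign3, hsign2, hpow3]
  have hm3 : ((m:ℝ)+3) ≠ 0 := by positivity
  field_simp
  ring

set_option maxHeartbeats 1000000 in
lemma uaux_ratio {p : ℝ} (hp : -1 < p) (hp2 : p ≤ -1/2) (x : ℝ) (m : ℕ) :
    uaux p x (m+1) = uaux p x m * (x^2/4) *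
      (((m:ℝ)+2)*((m:ℝ)+1-p) / (((m:ℝ)+1)*((m:ℝ)-p)*((m:ℝ)+4)*(p+(m:ℝ)+5))) := by
  have hp1 : (0:ℝ) < p+1 := by linarith
  have hm : (0:ℝ) ≤ m := Nat.cast_nonneg m
  have hP := poch_pos hp (p := p) (m+3)
  have hpoch : poch p (m+4) = poch p (m+3) * (p+m+4) := by
    have h := poch_succ p (m+3)
    rw [show (p+1+((m+3:ℕ):ℝ)) = p+m+4 by push_cast; ring] at h
    exact h
  have hfac : ((m+3).factorial : ℝ) = ((m:ℝ)+3) * (m+2).factorial := by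
    rw [show m+3 = (m+2)+1 from rfl, Nat.factorial_succ]; push_cast; ring
  have hfm : (0:ℝ) < ((m+2).factorial : ℝ) := by positivity
  rw [uaux, uaux]
  rw [show m+1+3 = (m+3)+1 from rfl, show m+1+2 = m+3 from rfl, hfac]
  rw [show poch p (m+3+1) = poch p (m+3) * (p+m+4) from hpoch]
  rw [pow_succ]
  push_cast
  generalize hPg : poch p (m+3) = P at hP
  generalize hFg : ((m+2).factorial : ℝ) = F at hfm
  generalize hrg : (m:ℝ) = r at hm
  have hm3 : (r+3) ≠ 0 := by positivity
  have hm4 : (r+4) ≠ 0 := by positivity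
  have hm1 : (r+1) ≠ 0 := by positivity
  have hmp : (r-p) ≠ 0 := by intro h; nlinarith
  have hpm4 : (p+r+4) ≠ 0 := by intro h; nlinarith
  have hpm5 : (p+r+5) ≠ 0 := by intro h; nlinarith
  have hp3 : (p+3) ≠ 0 := by intro h; nlinarith
  have hP' : P ≠ 0 := ne_of_gt hP
  have hF' : F ≠ 0 := ne_of_gt hfm
  have hm4' : r+1+3 ≠ 0 := by intro h; apply hm4; linarith
  have hpm5' : p+(r+1)+4 ≠ 0 := by intro h; apply hpm5; linarith
  field_simp
  ring

lemma uaux_le {p : ℝ} (hp : -1 < p) (hp2 : p ≤ -1/2) {x : ℝ} (hx : 0 < x) (m : ℕ) :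
    uaux p x (m+1) ≤ (x^2/12) * uaux p x m := by
  have hm : (0:ℝ) ≤ m := Nat.cast_nonneg m
  have hu := uaux_pos hp hp2 hx (p := p) (x := x) m
  have hden : (0:ℝ) < ((m:ℝ)+1)*((m:ℝ)-p)*((m:ℝ)+4)*(p+(m:ℝ)+5) := by
    have h1 : (0:ℝ) < (m:ℝ)+1 := by linarith
    have h2 : (0:ℝ) < (m:ℝ)-p := by linarith
    have h3 : (0:ℝ) < (m:ℝ)+4 := by linarith
    have h4 : (0:ℝ) < p+(m:ℝ)+5 := by linarith
    positivity
  have hR : ((m:ℝ)+2)*((m:ℝ)+1-p) / (((m:ℝ)+1)*((m:ℝ)-p)*((m:ℝ)+4)*(p+(m:ℝ)+5)) ≤ 1/3 := by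
    rw [div_le_div_iff₀ hden (by norm_num)]
    nlinarith [mul_nonneg hm (by linarith : (0:ℝ) ≤ -2*p-1), mul_nonneg hm hm,
      mul_nonneg (mul_nonneg hm hm) hm, mul_nonneg (mul_nonneg hm hm) (by linarith : (0:ℝ) ≤ -2*p-1),
      mul_nonneg (mul_nonneg (mul_nonneg hm hm) hm) hm,
      mul_nonneg hm (by linarith : (0:ℝ) ≤ p+1), mul_nonneg (mul_nonneg hm hm) (by linarith : (0:ℝ) ≤ p+1),
      mul_nonneg (le_of_lt (mul_pos (by linarith : (0:ℝ) < p+1) (by linarith : (0:ℝ) < p+3))) hm]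
  rw [uaux_ratio hp hp2 x m]
  calc uaux p x m * (x^2/4) * (((m:ℝ)+2)*((m:ℝ)+1-p) / (((m:ℝ)+1)*((m:ℝ)-p)*((m:ℝ)+4)*(p+(m:ℝ)+5)))
      ≤ uaux p x m * (x^2/4) * (1/3) := by
        apply mul_le_mul_of_nonneg_left hR (by positivity)
    _ = (x^2/12) * uaux p x m := by ring

lemma aterm_zero (p x : ℝ) : aterm p x 0 = 1 := by
  simp [aterm, poch_zero]

lemma aterm_one {p : ℝ} (hp : p+1 ≠ 0) (x : ℝ) : aterm p x 1 = -(x^2)/(4*(p+1)) := by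
  rw [aterm, poch_one]
  norm_num [Nat.factorial]
  field_simp

lemma aterm_two' {p : ℝ} (hp : p+1 ≠ 0) (hq : p+2 ≠ 0) (x : ℝ) :
    aterm p x 2 = x^4/(32*((p+1)*(p+2))) := by
  rw [aterm, poch_two]
  norm_num [Nat.factorial]
  rw [div_eq_div_iff (by exact mul_ne_zero (mul_ne_zero hp hq) two_ne_zero)
    (by exact mul_ne_zero (by norm_num) (mul_ne_zero hp hq))]
  ring

lemma G_eq {p : ℝ} (hp : -1 < p) (hp2 : p ≤ -1/2) (x : ℝ) :
    1/(p+1) + besselJn p x - (1/(8*(p+1)*(p+3))) * x^2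
      - ((p+2)/(p+1) - (1/(8*(p+1)*(p+3))) * x^2) * besselJn (p+1) x
    = ∑' m, hterm p x m := by
  have hp' : -1 < p+1 := by linarith
  have hp1 : (p:ℝ)+1 ≠ 0 := by intro h; linarith
  have hp3 : (p:ℝ)+3 ≠ 0 := by intro h; linarith
  have hp2' : (p:ℝ)+2 ≠ 0 := by intro h; linarith
  have sA := summable_aterm hp x
  have sB := summable_aterm hp' x
  have sA3 : Summable (fun m => aterm p x (m+3)) := (summable_nat_add_iff 3).mpr sA
  have sB3 : Summable (fun m => aterm (p+1) x (m+3)) := (summable_nat_add_iff 3).mpr sB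
  have sB2 : Summable (fun m => aterm (p+1) x (m+2)) := (summable_nat_add_iff 2).mpr sB
  have hA3 := Summable.sum_add_tsum_nat_add 3 sA
  have hB3 := Summable.sum_add_tsum_nat_add 3 sB
  have hB2 := Summable.sum_add_tsum_nat_add 2 sB
  have hsplit : ∑' m, hterm p x m
      = (∑' m, aterm p x (m+3)) - (p+2)/(p+1) * (∑' m, aterm (p+1) x (m+3))
        + (1/(8*(p+1)*(p+3))) * x^2 * (∑' m, aterm (p+1) x (m+2)) := by
    rw [show (∑' m, hterm p x m)
        = ∑' m, ((aterm p x (m+3) - (p+2)/(p+1) * aterm (p+1) x (m+3))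
            + (1/(8*(p+1)*(p+3))) * x^2 * aterm (p+1) x (m+2)) from rfl]
    rw [Summable.tsum_add (sA3.sub (sB3.mul_left _)) (sB2.mul_left _)]
    rw [Summable.tsum_sub sA3 (sB3.mul_left _), tsum_mul_left, tsum_mul_left]
  rw [besselJn_eq hp, besselJn_eq hp', hsplit]
  calc 1/(p+1) + (∑' n, aterm p x n) - (1/(8*(p+1)*(p+3))) * x^2
      - ((p+2)/(p+1) - (1/(8*(p+1)*(p+3))) * x^2) * (∑' n, aterm (p+1) x n)
      = 1/(p+1) + (∑' n, aterm p x n) - (1/(8*(p+1)*(p+3))) * x^2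
        - (p+2)/(p+1) * (∑' n, aterm (p+1) x n)
        + (1/(8*(p+1)*(p+3))) * x^2 * (∑' n, aterm (p+1) x n) := by ring
    _ = 1/(p+1) + ((∑ i ∈ Finset.range 3, aterm p x i) + ∑' m, aterm p x (m+3))
        - (1/(8*(p+1)*(p+3))) * x^2
        - (p+2)/(p+1) * ((∑ i ∈ Finset.range 3, aterm (p+1) x i) + ∑' m, aterm (p+1) x (m+3))
        + (1/(8*(p+1)*(p+3))) * x^2 * ((∑ i ∈ Finset.range 2, aterm (p+1) x i) + ∑' m, aterm (p+1) x (m+2)) := by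
        rw [hA3, hB3, hB2]
    _ = _ := by
        have h2 : (p:ℝ)+1+1 ≠ 0 := by intro h; linarith
        have h3 : (p:ℝ)+1+2 ≠ 0 := by intro h; linarith
        simp only [Finset.sum_range_succ, Finset.sum_range_zero, Finset.sum_range_one]
        rw [aterm_zero, aterm_one hp1, aterm_two' hp1 hp2', aterm_zero, aterm_one h2,
          aterm_two' h2 h3]
        have key : 1/(p+1) + (1 + -(x^2)/(4*(p+1)) + x^4/(32*((p+1)*(p+2))))
            - (1/(8*(p+1)*(p+3))) * x^2
            - (p+2)/(p+1) * (1 + -(x^2)/(4*(p+1+1)) + x^4/(32*((p+1+1)*(p+1+2))))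
            + (1/(8*(p+1)*(p+3))) * x^2 * (1 + -(x^2)/(4*(p+1+1))) = 0 := by
          field_simp
          ring
        linarith [key]

theorem bessel_frame_lower (p : ℝ) (hp1 : -1 < p) (hp2 : p ≤ -1/2) (jp1 : ℝ)
    (hj : IsLeast {x : ℝ | 0 < x ∧ besselJ p x = 0} jp1)
    (x : ℝ) (hx0 : 0 < x) (hx : x < jp1) :
    ((p+2)/(p+1) - (1/(8*(p+1)*(p+3))) * x^2) * besselJn (p+1) x <
      1/(p+1) + besselJn p x - (1/(8*(p+1)*(p+3))) * x^2 := by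
  obtain ⟨c, hc0, hc2, hcJ⟩ := exists_zero hp1 hp2
  have hjc : jp1 ≤ c := hj.2 ⟨hc0, hcJ⟩
  have hx2 : x < 2 := by linarith
  have hG := G_eq hp1 hp2 x
  have hp' : -1 < p+1 := by linarith
  have sA := summable_aterm hp1 x
  have sB := summable_aterm hp' x
  have sh : Summable (hterm p x) := by
    have : Summable (fun m => aterm p x (m+3) - (p+2)/(p+1) * aterm (p+1) x (m+3)
        + (1/(8*(p+1)*(p+3))) * x^2 * aterm (p+1) x (m+2)) :=
      (((summable_nat_add_iff 3).mpr sA).sub (((summable_nat_add_iff 3).mpr sB).mul_left _)).add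
        (((summable_nat_add_iff 2).mpr sB).mul_left _)
    exact this
  set q : ℝ := x^2/12 with hqdef
  have hq0 : 0 ≤ q := by positivity
  have hq1 : q < 1/3 := by rw [hqdef]; nlinarith
  have hq2 : q < 1 := by linarith
  have hub : ∀ m, uaux p x m ≤ uaux p x 0 * q^m := by
    intro m; induction m with
    | zero => simp
    | succ m ih =>
      calc uaux p x (m+1) ≤ (x^2/12) * uaux p x m := uaux_le hp1 hp2 hx0 m
        _ ≤ q * (uaux p x 0 * q^m) := by
            apply mul_le_mul_of_nonneg_left ih (by positivity)
        _ = uaux p x 0 * q^(m+1) := by ring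
  have hu0 := uaux_pos hp1 hp2 hx0 (p := p) (x := x) 0
  have hlow : ∀ m, -(uaux p x 0 * q * q^m) ≤ hterm p x (m+1) := by
    intro m
    rw [hterm_eq hp1 x (m+1)]
    have h1 : uaux p x (m+1) ≤ uaux p x 0 * q^(m+1) := hub (m+1)
    have hum := uaux_pos hp1 hp2 hx0 (p := p) (x := x) (m+1)
    have h2 : -uaux p x (m+1) ≤ (-1:ℝ)^(m+1) * uaux p x (m+1) := by
      rcases Nat.even_or_odd (m+1) with h | h
      · rw [h.neg_one_pow]; linarith
      · rw [h.neg_one_pow]; linarith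
    calc -(uaux p x 0 * q * q^m) = -(uaux p x 0 * q^(m+1)) := by ring
      _ ≤ -uaux p x (m+1) := by linarith
      _ ≤ _ := h2
  have hgeo : Summable (fun m : ℕ => -(uaux p x 0 * q * q^m)) :=
    ((summable_geometric_of_lt_one hq0 hq2).mul_left _).neg
  have h1s : Summable (fun m => hterm p x (m+1)) := (summable_nat_add_iff 1).mpr sh
  have htsum_ge : -(uaux p x 0 * q * (1-q)⁻¹) ≤ ∑' m, hterm p x (m+1) := by
    have := Summable.tsum_le_tsum hlow hgeo h1s
    rwa [tsum_neg, tsum_mul_left, tsum_geometric_of_lt_one hq0 hq2] at this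
  have hsplit1 := Summable.sum_add_tsum_nat_add 1 sh
  have hh0 : hterm p x 0 = uaux p x 0 := by rw [hterm_eq hp1 x 0]; simp
  have hsum_pos : 0 < ∑' m, hterm p x m := by
    rw [← hsplit1, Finset.sum_range_one, hh0]
    have h1q : (0:ℝ) < 1-q := by linarith
    have hlast : uaux p x 0 * q * (1-q)⁻¹ < uaux p x 0 := by
      rw [← div_eq_mul_inv, div_lt_iff₀ h1q]
      nlinarith
    linarith
  linarith [hG, hsum_pos]
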